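/- Let A ∈ ℝ^{n×n}, B ∈ ℝ^{n×m}, H ∈ ℝ^{n×q}, let T ∈ {0,1}^{m×n} be a binary matrix, and let R ∈ {0,1}^{n×n} be a symmetric binary matrix with R ≥ I_n. The following are equivalent: (1) there exist X ∈ Sparse(R^{n−1}) with X ≻ 0, Y ∈ Sparse(T), and Z ∈ ℝ^{m×m} such that the block matrix [[Z, Y], [Yᵀ, X]] ⪰ 0 and AX + XAᵀ + BY + YᵀBᵀ + HHᵀ ≺ 0; (2) there exist Y ∈ Sparse(T) and P ∈ Sparse(R^{n−1}) with P ≻ 0 such that, setting K = YP, one has (A + BK)ᵀP + P(A + BK) + PHHᵀP ≺ 0. -/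

import Mathlib

open Matrix

/-- Structural product of binary (Boolean) matrices:
`(sprod X Z) i j = true` iff `∃ k, X i k = true ∧ Z k j = true`. -/
def sprod {m n p : ℕ} (X : Matrix (Fin m) (Fin n) Bool) (Z : Matrix (Fin n) (Fin p) Bool) :
    Matrix (Fin m) (Fin p) Bool :=
  Matrix.of fun i j => decide (∃ k, X i k = true ∧ Z k j = true)

/-- Structural power of a binary matrix, with `spow R 0 = I`. -/
def spow {n : ℕ} (R : Matrix (Fin n) (Fin n) Bool) : ℕ → Matrix (Fin n) (Fin n) Bool
  | 0 => Matrix.of fun i j => decide (i = j)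
  | k + 1 => sprod (spow R k) R

/-- `Y` belongs to the sparsity subspace `Sparse(X)`. -/
def InSparse {m n : ℕ} (X : Matrix (Fin m) (Fin n) Bool) (Y : Matrix (Fin m) (Fin n) ℝ) : Prop :=
  ∀ i j, X i j = false → Y i j = 0

/-- The binary matrix encoding the sparsity pattern of a real matrix. -/
noncomputable def Struct {m n : ℕ} (Y : Matrix (Fin m) (Fin n) ℝ) : Matrix (Fin m) (Fin n) Bool :=
  Matrix.of fun i j => decide (Y i j ≠ 0)

/-- Entrywise order on binary matrices: `leB X X'` means `X ≤ X'`. -/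
def leB {m n : ℕ} (X X' : Matrix (Fin m) (Fin n) Bool) : Prop :=
  ∀ i j, X i j = true → X' i j = true

lemma sprod_apply {m n p : ℕ} {X : Matrix (Fin m) (Fin n) Bool} {Z : Matrix (Fin n) (Fin p) Bool}
    {i j} : sprod X Z i j = true ↔ ∃ k, X i k = true ∧ Z k j = true := by
  simp [sprod]

lemma sprod_assoc {a b c d : ℕ} (X : Matrix (Fin a) (Fin b) Bool)
    (Y : Matrix (Fin b) (Fin c) Bool) (Z : Matrix (Fin c) (Fin d) Bool) :
    sprod (sprod X Y) Z = sprod X (sprod Y Z) := by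
  ext i j
  rw [Bool.eq_iff_iff, sprod_apply, sprod_apply]
  constructor
  · rintro ⟨k, hk, hz⟩
    obtain ⟨l, hx, hy⟩ := sprod_apply.mp hk
    exact ⟨l, hx, sprod_apply.mpr ⟨k, hy, hz⟩⟩
  · rintro ⟨l, hx, hk⟩
    obtain ⟨k, hy, hz⟩ := sprod_apply.mp hk
    exact ⟨k, sprod_apply.mpr ⟨l, hx, hy⟩, hz⟩

lemma one_sprod {a b : ℕ} (X : Matrix (Fin a) (Fin b) Bool) :
    sprod (Matrix.of fun i j => decide (i = j)) X = X := by
  ext i j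
  rw [Bool.eq_iff_iff, sprod_apply]
  simp

lemma sprod_one {a b : ℕ} (X : Matrix (Fin a) (Fin b) Bool) :
    sprod X (Matrix.of fun i j => decide (i = j)) = X := by
  ext i j
  rw [Bool.eq_iff_iff, sprod_apply]
  simp

lemma spow_succ' {n : ℕ} (R : Matrix (Fin n) (Fin n) Bool) (k : ℕ) :
    spow R (k + 1) = sprod R (spow R k) := by
  induction k with
  | zero =>
      show sprod (spow R 0) R = sprod R (spow R 0)
      unfold spow
      rw [one_sprod, sprod_one]
  | succ k ih =>
      show sprod (spow R (k + 1)) R = sprod R (spow R (k + 1))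
      rw [ih, sprod_assoc, show sprod (spow R k) R = sprod R (spow R k) from ih]

/-- The graph of the binary matrix `R`. -/
def adjGraph {n : ℕ} (R : Matrix (Fin n) (Fin n) Bool) (hsym : ∀ i j, R i j = R j i) :
    SimpleGraph (Fin n) where
  Adj i j := i ≠ j ∧ R i j = true
  symm := ⟨by rintro i j ⟨h1, h2⟩; exact ⟨h1.symm, (hsym j i).trans h2⟩⟩
  loopless := ⟨by rintro i ⟨h1, _⟩; exact h1 rfl⟩

lemma spow_diag {n : ℕ} {R : Matrix (Fin n) (Fin n) Bool} (hdiag : ∀ i, R i i = true)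
    (k : ℕ) (i : Fin n) : spow R k i i = true := by
  induction k with
  | zero => simp [spow]
  | succ k ih => exact sprod_apply.mpr ⟨i, ih, hdiag i⟩

lemma walk_spow {n : ℕ} {R : Matrix (Fin n) (Fin n) Bool} {hsym : ∀ i j, R i j = R j i}
    (hdiag : ∀ i, R i i = true) :
    ∀ (k : ℕ) {i j : Fin n} (p : (adjGraph R hsym).Walk i j), p.length ≤ k →
      spow R k i j = true := by
  intro k
  induction k with
  | zero =>
      intro i j p hp
      have := SimpleGraph.Walk.eq_of_length_eq_zero (Nat.le_zero.mp hp)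
      subst this
      simp [spow]
  | succ k ih =>
      intro i j p hp
      cases p with
      | nil => exact spow_diag hdiag _ i
      | cons h q =>
          rw [spow_succ']
          exact sprod_apply.mpr ⟨_, h.2, ih q (by simpa using hp)⟩

lemma spow_walk {n : ℕ} {R : Matrix (Fin n) (Fin n) Bool} (hsym : ∀ i j, R i j = R j i) :
    ∀ (k : ℕ) {i j : Fin n}, spow R k i j = true →
      ∃ p : (adjGraph R hsym).Walk i j, p.length ≤ k := by
  intro k
  induction k with
  | zero =>
      intro i j h
      simp only [spow, Matrix.of_apply, decide_eq_true_eq] at h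
      subst h
      exact ⟨SimpleGraph.Walk.nil, le_rfl⟩
  | succ k ih =>
      intro i j h
      obtain ⟨l, h1, h2⟩ := sprod_apply.mp h
      obtain ⟨p, hp⟩ := ih h1
      by_cases hlj : l = j
      · subst hlj
        exact ⟨p, hp.trans (Nat.le_succ k)⟩
      · exact ⟨p.concat ⟨hlj, h2⟩, (p.length_concat _).trans_le (by omega)⟩

section SparseAlg

variable {n : ℕ} {Q : Matrix (Fin n) (Fin n) Bool}

lemma inSparse_one (hdiagQ : ∀ i, Q i i = true) : InSparse Q (1 : Matrix (Fin n) (Fin n) ℝ) := by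
  intro i j h
  have hne : i ≠ j := by rintro rfl; rw [hdiagQ i] at h; exact absurd h (by simp)
  exact Matrix.one_apply_ne hne

lemma inSparse_mul (htrans : ∀ i j k : Fin n, Q i k = true → Q k j = true → Q i j = true)
    {M N : Matrix (Fin n) (Fin n) ℝ} (hM : InSparse Q M) (hN : InSparse Q N) :
    InSparse Q (M * N) := by
  intro i j h
  rw [Matrix.mul_apply]
  refine Finset.sum_eq_zero fun k _ => ?_
  by_cases hik : Q i k = true
  · have hkj : Q k j = false := by
      cases hkj : Q k j
      · rfl
      · rw [htrans i j k hik hkj] at h; exact absurd h (by simp)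
    rw [hN k j hkj, mul_zero]
  · rw [hM i k (by simpa using hik), zero_mul]

lemma inSparse_pow (htrans : ∀ i j k : Fin n, Q i k = true → Q k j = true → Q i j = true)
    (hdiagQ : ∀ i, Q i i = true) {M : Matrix (Fin n) (Fin n) ℝ} (hM : InSparse Q M) :
    ∀ k : ℕ, InSparse Q (M ^ k)
  | 0 => by rw [pow_zero]; exact inSparse_one hdiagQ
  | k + 1 => by
      rw [pow_succ]
      exact inSparse_mul htrans (inSparse_pow htrans hdiagQ hM k) hM

lemma inSparse_smul {a b : ℕ} {Q' : Matrix (Fin a) (Fin b) Bool} (c : ℝ)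
    {M : Matrix (Fin a) (Fin b) ℝ} (hM : InSparse Q' M) : InSparse Q' (c • M) := by
  intro i j h
  rw [Matrix.smul_apply, hM i j h, smul_zero]

lemma inSparse_sum {a b : ℕ} {Q' : Matrix (Fin a) (Fin b) Bool} {ι : Type*} {s : Finset ι}
    {f : ι → Matrix (Fin a) (Fin b) ℝ} (h : ∀ i ∈ s, InSparse Q' (f i)) :
    InSparse Q' (∑ i ∈ s, f i) := by
  intro i j hij
  rw [Matrix.sum_apply]
  exact Finset.sum_eq_zero fun k hk => h k hk i j hij

lemma inSparse_inv (htrans : ∀ i j k : Fin n, Q i k = true → Q k j = true → Q i j = true)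
    (hdiagQ : ∀ i, Q i i = true) {M : Matrix (Fin n) (Fin n) ℝ}
    (hM : InSparse Q M) (hdet : IsUnit M.det) : InSparse Q M⁻¹ := by
  classical
  set p := M.charpoly with hp
  set c := p.coeff 0 with hc
  have hcne : c ≠ 0 := by
    intro h0
    have := Matrix.det_eq_sign_charpoly_coeff M
    rw [← hp, ← hc, h0, mul_zero] at this
    exact hdet.ne_zero this
  have h0 : Polynomial.aeval M p = 0 := Matrix.aeval_self_charpoly M
  have hsplit : p.divX * Polynomial.X + Polynomial.C c = p := p.divX_mul_X_add
  set q : Matrix (Fin n) (Fin n) ℝ := Polynomial.aeval M p.divX with hq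
  have hqM : q * M + c • (1 : Matrix (Fin n) (Fin n) ℝ) = 0 := by
    have := congrArg (Polynomial.aeval M) hsplit
    rw [map_add, _root_.map_mul, Polynomial.aeval_X, Polynomial.aeval_C, h0,
      Algebra.algebraMap_eq_smul_one] at this
    exact this
  have hqM1 : ((-c)⁻¹ • q) * M = 1 := by
    have h1 : q * M = (-c) • (1 : Matrix (Fin n) (Fin n) ℝ) := by
      rw [neg_smul]
      exact eq_neg_of_add_eq_zero_left hqM
    rw [Matrix.smul_mul, h1, smul_smul, inv_mul_cancel₀ (neg_ne_zero.mpr hcne), one_smul]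
  have hMinv : M⁻¹ = (-c)⁻¹ • q := Matrix.inv_eq_left_inv hqM1
  rw [hMinv]
  apply inSparse_smul
  rw [hq, Polynomial.aeval_eq_sum_range]
  exact inSparse_sum fun i _ => inSparse_smul _ (inSparse_pow htrans hdiagQ hM i)

end SparseAlg

lemma posDef_conj {n : ℕ} {N C : Matrix (Fin n) (Fin n) ℝ} (hN : N.PosDef) (hC : IsUnit C) :
    (Cᵀ * N * C).PosDef := by
  have hCt : Cᵀ = Cᴴ := (Matrix.conjTranspose_eq_transpose_of_trivial C).symm
  rw [hCt]
  refine Matrix.PosDef.of_dotProduct_mulVec_pos ?_ ?_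
  · exact Matrix.isHermitian_conjTranspose_mul_mul C hN.1
  · intro x hx
    have hdetC : IsUnit C.det := (Matrix.isUnit_iff_isUnit_det C).mp hC
    have hx' : C *ᵥ x ≠ 0 := by
      intro h0
      apply hx
      have h2 := congrArg (fun v => C⁻¹ *ᵥ v) h0
      simpa [Matrix.mulVec_mulVec, Matrix.nonsing_inv_mul C hdetC] using h2
    simpa only [star_mulVec, Matrix.dotProduct_mulVec, Matrix.vecMul_vecMul]
      using hN.dotProduct_mulVec_pos hx'

/-- Theorem 2: feasibility of the convex restriction
`P_{T,R^{n-1}}` is equivalent to the existence of a suitably structured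
separable Lyapunov certificate.  Negative (semi)definiteness of a symmetric
matrix `M` is encoded as `(-M).PosDef`. -/
theorem convex_restriction_feasibility_iff_separable_lyapunov
    {n m q : ℕ} (A : Matrix (Fin n) (Fin n) ℝ) (B : Matrix (Fin n) (Fin m) ℝ)
    (H : Matrix (Fin n) (Fin q) ℝ) (T : Matrix (Fin m) (Fin n) Bool)
    (R : Matrix (Fin n) (Fin n) Bool)
    (hsym : ∀ i j, R i j = R j i) (hdiag : ∀ i, R i i = true) :
    (∃ (X : Matrix (Fin n) (Fin n) ℝ) (Y : Matrix (Fin m) (Fin n) ℝ)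
        (Z : Matrix (Fin m) (Fin m) ℝ),
          InSparse (spow R (n - 1)) X ∧ X.PosDef ∧ InSparse T Y ∧
          (Matrix.fromBlocks Z Y Yᵀ X).PosSemidef ∧
          (-(A * X + X * Aᵀ + B * Y + Yᵀ * Bᵀ + H * Hᵀ)).PosDef) ↔
    (∃ (Y : Matrix (Fin m) (Fin n) ℝ) (P : Matrix (Fin n) (Fin n) ℝ),
        InSparse T Y ∧ InSparse (spow R (n - 1)) P ∧ P.PosDef ∧
        (-((A + B * (Y * P))ᵀ * P + P * (A + B * (Y * P)) + P * H * Hᵀ * P)).PosDef) := by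
  have hdiagQ : ∀ i, spow R (n - 1) i i = true := spow_diag hdiag _
  have htrans : ∀ i j k : Fin n, spow R (n - 1) i k = true → spow R (n - 1) k j = true →
      spow R (n - 1) i j = true := by
    intro i j k h1 h2
    obtain ⟨p, _⟩ := spow_walk hsym _ h1
    obtain ⟨p', _⟩ := spow_walk hsym _ h2
    have hb := (p.append p').bypass_isPath
    have hlt := hb.length_lt
    rw [Fintype.card_fin] at hlt
    exact walk_spow hdiag _ ((p.append p').bypass) (by omega)
  constructor
  · rintro ⟨X, Y, Z, hXs, hXpd, hYs, _hblk, hlmi⟩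
    have hdetX : IsUnit X.det := (Matrix.isUnit_iff_isUnit_det X).mp hXpd.isUnit
    set P := X⁻¹ with hPdef
    have hPpd : P.PosDef := hXpd.inv
    have hXP : X * P = 1 := Matrix.mul_nonsing_inv X hdetX
    have hPX : P * X = 1 := Matrix.nonsing_inv_mul X hdetX
    have hPsymm : Pᵀ = P :=
      (Matrix.conjTranspose_eq_transpose_of_trivial P).symm.trans hPpd.isHermitian.eq
    have hPXM : ∀ {p : ℕ} (M : Matrix (Fin n) (Fin p) ℝ), P * (X * M) = M := by
      intro p M; rw [← Matrix.mul_assoc, hPX, Matrix.one_mul]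
    have hXPM : ∀ {p : ℕ} (M : Matrix (Fin n) (Fin p) ℝ), X * (P * M) = M := by
      intro p M; rw [← Matrix.mul_assoc, hXP, Matrix.one_mul]
    refine ⟨Y, P, hYs, inSparse_inv htrans hdiagQ hXs hdetX, hPpd, ?_⟩
    have key : (A + B * (Y * P))ᵀ * P + P * (A + B * (Y * P)) + P * H * Hᵀ * P =
        P * (A * X + X * Aᵀ + B * Y + Yᵀ * Bᵀ + H * Hᵀ) * P := by
      simp only [Matrix.transpose_add, Matrix.transpose_mul, hPsymm, Matrix.add_mul,
        Matrix.mul_add, Matrix.mul_assoc, hXP, hPX, hPXM, hXPM, Matrix.mul_one, Matrix.one_mul]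
      abel
    have key2 : -((A + B * (Y * P))ᵀ * P + P * (A + B * (Y * P)) + P * H * Hᵀ * P) =
        Pᵀ * (-(A * X + X * Aᵀ + B * Y + Yᵀ * Bᵀ + H * Hᵀ)) * P := by
      rw [key, hPsymm, Matrix.mul_neg, Matrix.neg_mul]
    rw [key2]
    exact posDef_conj hlmi hPpd.isUnit
  · rintro ⟨Y, P, hYs, hPs, hPpd, hlmi⟩
    have hdetP : IsUnit P.det := (Matrix.isUnit_iff_isUnit_det P).mp hPpd.isUnit
    set X := P⁻¹ with hXdef
    have hXpd : X.PosDef := hPpd.inv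
    have hXP : X * P = 1 := Matrix.nonsing_inv_mul P hdetP
    have hPX : P * X = 1 := Matrix.mul_nonsing_inv P hdetP
    have hPsymm : Pᵀ = P :=
      (Matrix.conjTranspose_eq_transpose_of_trivial P).symm.trans hPpd.isHermitian.eq
    have hXsymm : Xᵀ = X :=
      (Matrix.conjTranspose_eq_transpose_of_trivial X).symm.trans hXpd.isHermitian.eq
    have hPXM : ∀ {p : ℕ} (M : Matrix (Fin n) (Fin p) ℝ), P * (X * M) = M := by
      intro p M; rw [← Matrix.mul_assoc, hPX, Matrix.one_mul]
    have hXPM : ∀ {p : ℕ} (M : Matrix (Fin n) (Fin p) ℝ), X * (P * M) = M := by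
      intro p M; rw [← Matrix.mul_assoc, hXP, Matrix.one_mul]
    have hdetX : IsUnit X.det := (Matrix.isUnit_iff_isUnit_det X).mp hXpd.isUnit
    refine ⟨X, Y, Y * P * Yᵀ, inSparse_inv htrans hdiagQ hPs hdetP, hXpd, hYs, ?_, ?_⟩
    · haveI : Invertible X := X.invertibleOfIsUnitDet hdetX
      have hYt : Yᵀ = Yᴴ := (Matrix.conjTranspose_eq_transpose_of_trivial Y).symm
      rw [hYt, Matrix.PosDef.fromBlocks₂₂ _ _ hXpd]
      have hXinv : X⁻¹ = P := Matrix.nonsing_inv_nonsing_inv P hdetP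
      rw [hXinv, ← hYt, sub_self]
      exact Matrix.PosSemidef.zero
    · have key : A * X + X * Aᵀ + B * Y + Yᵀ * Bᵀ + H * Hᵀ =
          X * ((A + B * (Y * P))ᵀ * P + P * (A + B * (Y * P)) + P * H * Hᵀ * P) * X := by
        simp only [Matrix.transpose_add, Matrix.transpose_mul, hPsymm, Matrix.add_mul,
          Matrix.mul_add, Matrix.mul_assoc, hXP, hPX, hPXM, hXPM, Matrix.mul_one, Matrix.one_mul]
        abel
      have key2 : -(A * X + X * Aᵀ + B * Y + Yᵀ * Bᵀ + H * Hᵀ) =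
          Xᵀ * (-((A + B * (Y * P))ᵀ * P + P * (A + B * (Y * P)) + P * H * Hᵀ * P)) * X := by
        rw [key, hXsymm, Matrix.mul_neg, Matrix.neg_mul]
      rw [key2]
      exact posDef_conj hlmi hXpd.isUnit
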